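/- Let I = [0,1] be the unit interval with the metric induced from ℝ. Then for every t > 0, the supremum of |tA|_Rips over all finite nonempty subsets A ⊆ I equals 1 + t. -/

import Mathlib

open scoped BigOperators

/-- The Rips magnitude function of a finite subset `A` of a metric space:
`|tA|_Rips = Σ_{∅ ≠ B ⊆ A} (−1)^{#B−1} e^{−diam(B)·t}`. -/
noncomputable def ripsMag {Y : Type*} [MetricSpace Y] (A : Finset Y) (t : ℝ) : ℝ :=
  ∑ B ∈ A.powerset.filter (fun B => B.Nonempty),
    (-1 : ℝ) ^ (B.card - 1) * Real.exp (-(Metric.diam (B : Set Y)) * t)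

lemma diam_coe (B : Finset ℝ) (h : B.Nonempty) :
    Metric.diam (B : Set ℝ) = B.max' h - B.min' h := by
  apply le_antisymm
  · apply Metric.diam_le_of_forall_dist_le
    · have h1 := B.min'_le _ (B.max'_mem h)
      linarith
    · intro x hx y hy
      rw [Finset.mem_coe] at hx hy
      rw [Real.dist_eq, abs_sub_le_iff]
      constructor
      · have := B.le_max' x hx; have := B.min'_le y hy; linarith
      · have := B.le_max' y hy; have := B.min'_le x hx; linarith
  · have hb : Bornology.IsBounded (B : Set ℝ) := B.finite_toSet.isBounded
    have := Metric.dist_le_diam_of_mem hb (Finset.mem_coe.2 (B.max'_mem h))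
      (Finset.mem_coe.2 (B.min'_mem h))
    rwa [Real.dist_eq, abs_of_nonneg
      (by have := B.min'_le _ (B.max'_mem h); linarith)] at this

lemma diam_insert_lt (B : Finset ℝ) (hB : B.Nonempty) (m : ℝ) (hm : ∀ x ∈ B, x < m) :
    Metric.diam (↑(insert m B) : Set ℝ) = m - B.min' hB := by
  have hne : (insert m B).Nonempty := ⟨m, Finset.mem_insert_self m B⟩
  rw [diam_coe _ hne]
  have hmax : (insert m B).max' hne = m := by
    apply le_antisymm
    · apply Finset.max'_le
      intro y hy
      rcases Finset.mem_insert.1 hy with rfl | hy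
      · exact le_refl y
      · exact (hm y hy).le
    · exact Finset.le_max' _ m (Finset.mem_insert_self m B)
  have hmin : (insert m B).min' hne = B.min' hB := by
    apply le_antisymm
    · exact Finset.min'_le _ _ (Finset.mem_insert_of_mem (B.min'_mem hB))
    · apply Finset.le_min'
      intro y hy
      rcases Finset.mem_insert.1 hy with rfl | hy
      · exact (hm _ (B.min'_mem hB)).le
      · exact Finset.min'_le _ _ hy
  rw [hmax, hmin]

lemma ripsMag_singleton (x t : ℝ) : ripsMag {x} t = 1 := by
  have hfil : (({x} : Finset ℝ).powerset.filter (fun B => B.Nonempty)) = {{x}} := by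
    ext B
    simp only [Finset.mem_filter, Finset.mem_powerset, Finset.mem_singleton,
      Finset.subset_singleton_iff, Finset.nonempty_iff_ne_empty]
    constructor
    · rintro ⟨h1 | h1, h2⟩ <;> tauto
    · rintro rfl; simp
  simp [ripsMag, hfil]

lemma ripsMag_insert' (A : Finset ℝ) (m : ℝ) (hm : m ∉ A) (t : ℝ) :
    ripsMag (insert m A) t = ripsMag A t +
      ∑ B ∈ A.powerset, (-1 : ℝ) ^ B.card *
        Real.exp (-(Metric.diam (↑(insert m B) : Set ℝ)) * t) := by
  have hinj : ∀ B₁ ∈ A.powerset, ∀ B₂ ∈ A.powerset, insert m B₁ = insert m B₂ → B₁ = B₂ := by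
    intro B₁ h1 B₂ h2 h
    rw [Finset.mem_powerset] at h1 h2
    have e1 : (insert m B₁).erase m = B₁ :=
      Finset.erase_insert (fun hc => hm (h1 hc))
    have e2 : (insert m B₂).erase m = B₂ :=
      Finset.erase_insert (fun hc => hm (h2 hc))
    rw [← e1, ← e2, h]
  have hdisj : Disjoint (A.powerset.filter (fun B => B.Nonempty))
      ((A.powerset.image (insert m)).filter (fun B => B.Nonempty)) := by
    rw [Finset.disjoint_left]
    intro B hB hB'
    simp only [Finset.mem_filter, Finset.mem_powerset, Finset.mem_image] at hB hB'
    obtain ⟨⟨C, hC, rfl⟩, -⟩ := hB'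
    exact hm (hB.1 (Finset.mem_insert_self m C))
  simp only [ripsMag]
  rw [Finset.powerset_insert, Finset.filter_union, Finset.sum_union hdisj]
  congr 1
  have hfil : (A.powerset.image (insert m)).filter (fun B => B.Nonempty)
      = A.powerset.image (insert m) := by
    apply Finset.filter_true_of_mem
    intro B hB
    obtain ⟨C, -, rfl⟩ := Finset.mem_image.1 hB
    exact ⟨m, Finset.mem_insert_self m C⟩
  rw [hfil, Finset.sum_image hinj]
  apply Finset.sum_congr rfl
  intro B hB
  rw [Finset.mem_powerset] at hB
  have hmB : m ∉ B := fun hc => hm (hB hc)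
  rw [Finset.card_insert_of_notMem hmB, Nat.add_sub_cancel]

lemma sum_powerset_eq (A : Finset ℝ) (hA : A.Nonempty) (m t : ℝ) (hm : ∀ x ∈ A, x < m) :
    ∑ B ∈ A.powerset, (-1 : ℝ) ^ B.card *
        Real.exp (-(Metric.diam (↑(insert m B) : Set ℝ)) * t)
      = 1 - Real.exp (-(m - A.max' hA) * t) := by
  set g : Finset ℝ → ℝ := fun B =>
    (-1 : ℝ) ^ B.card * Real.exp (-(Metric.diam (↑(insert m B) : Set ℝ)) * t) with hg
  set a := A.max' hA with hadef
  have haA : a ∈ A := A.max'_mem hA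
  set A' := A.erase a with hA'def
  have haA' : a ∉ A' := Finset.notMem_erase a A
  have hins : insert a A' = A := Finset.insert_erase haA
  have hlt : ∀ x ∈ A', x < a := fun x hx =>
    lt_of_le_of_ne (A.le_max' x (Finset.mem_of_mem_erase hx)) (Finset.ne_of_mem_erase hx)
  have hltm : ∀ x ∈ A', x < m := fun x hx => hm x (Finset.mem_of_mem_erase hx)
  have ham : a < m := hm a haA
  have hg0 : g ∅ = 1 := by
    simp [hg]
  have key : ∀ B ∈ A'.powerset, g (insert a B) =
      -(g B) + (if B = ∅ then (1 - Real.exp (-(m - a) * t)) else 0) := by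
    intro B hB
    rw [Finset.mem_powerset] at hB
    by_cases hBe : B = ∅
    · subst hBe
      rw [if_pos rfl, hg0]
      simp only [hg]
      have hia : (insert a (∅ : Finset ℝ)) = {a} := by simp
      rw [hia]
      have : Metric.diam (↑(insert m ({a} : Finset ℝ)) : Set ℝ) = m - a := by
        have := diam_insert_lt {a} ⟨a, Finset.mem_singleton_self a⟩ m
          (by intro x hx; rw [Finset.mem_singleton] at hx; subst hx; exact ham)
        simpa using this
      rw [this]
      simp only [Finset.card_singleton, pow_one]
      ring
    · have hBne : B.Nonempty := Finset.nonempty_iff_ne_empty.2 hBe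
      rw [if_neg hBe, add_zero]
      have haB : a ∉ B := fun hc => haA' (hB hc)
      have hd1 : Metric.diam (↑(insert m (insert a B)) : Set ℝ) = m - B.min' hBne := by
        have hne' : (insert a B).Nonempty := ⟨a, Finset.mem_insert_self a B⟩
        have h1 := diam_insert_lt (insert a B) hne' m (by
          intro x hx
          rcases Finset.mem_insert.1 hx with rfl | hx
          · exact ham
          · exact hltm x (hB hx))
        have hminins : (insert a B).min' hne' = B.min' hBne := by
          apply le_antisymm
          · exact Finset.min'_le _ _ (Finset.mem_insert_of_mem (B.min'_mem hBne))
          · apply Finset.le_min'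
            intro y hy
            rcases Finset.mem_insert.1 hy with rfl | hy
            · exact (Finset.min'_le _ _ (B.min'_mem hBne)).trans
                (hlt _ (hB (B.min'_mem hBne))).le
            · exact Finset.min'_le _ _ hy
        rw [h1, hminins]
      have hd2 : Metric.diam (↑(insert m B) : Set ℝ) = m - B.min' hBne :=
        diam_insert_lt B hBne m (fun x hx => hltm x (hB hx))
      simp only [hg]
      rw [hd1, hd2, Finset.card_insert_of_notMem haB, pow_succ]
      ring
  calc ∑ B ∈ A.powerset, g B
      = ∑ B ∈ (insert a A').powerset, g B := by rw [hins]
    _ = ∑ B ∈ A'.powerset, g B + ∑ B ∈ A'.powerset, g (insert a B) := by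
        rw [Finset.powerset_insert, Finset.sum_union, Finset.sum_image]
        · intro B₁ h1 B₂ h2 h
          rw [Finset.mem_coe, Finset.mem_powerset] at h1 h2
          have e1 : (insert a B₁).erase a = B₁ := Finset.erase_insert (fun hc => haA' (h1 hc))
          have e2 : (insert a B₂).erase a = B₂ := Finset.erase_insert (fun hc => haA' (h2 hc))
          rw [← e1, ← e2, h]
        · rw [Finset.disjoint_left]
          intro B hB hB'
          rw [Finset.mem_powerset] at hB
          obtain ⟨C, -, rfl⟩ := Finset.mem_image.1 hB'
          exact haA' (hB (Finset.mem_insert_self a C))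
    _ = ∑ B ∈ A'.powerset, g B +
          (∑ B ∈ A'.powerset, -(g B) +
           ∑ B ∈ A'.powerset, (if B = ∅ then (1 - Real.exp (-(m - a) * t)) else 0)) := by
        congr 1
        rw [← Finset.sum_add_distrib]
        exact Finset.sum_congr rfl key
    _ = 1 - Real.exp (-(m - a) * t) := by
        rw [Finset.sum_neg_distrib]
        rw [Finset.sum_ite_eq' A'.powerset (∅ : Finset ℝ)
          (fun _ => (1 - Real.exp (-(m - a) * t)))]
        rw [if_pos (Finset.empty_mem_powerset A')]
        ring

lemma ripsMag_insert_max (A : Finset ℝ) (hA : A.Nonempty) (m t : ℝ) (hm : ∀ x ∈ A, x < m) :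
    ripsMag (insert m A) t = ripsMag A t + 1 - Real.exp (-(m - A.max' hA) * t) := by
  have hmA : m ∉ A := fun hc => absurd (hm m hc) (lt_irrefl m)
  rw [ripsMag_insert' A m hmA t, sum_powerset_eq A hA m t hm]
  ring

lemma ripsMag_le (A : Finset ℝ) (t : ℝ) (ht : 0 ≤ t) :
    ∀ hA : A.Nonempty, ripsMag A t ≤ 1 + t * (A.max' hA - A.min' hA) := by
  induction A using Finset.induction_on_max with
  | empty => intro h; exact absurd h (by simp)
  | insert a s hs ih =>
    intro h
    by_cases hse : s.Nonempty
    · rw [ripsMag_insert_max s hse a t hs]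
      have h1 := ih hse
      have h2 : 1 - Real.exp (-(a - s.max' hse) * t) ≤ (a - s.max' hse) * t := by
        have he := Real.add_one_le_exp (-((a - s.max' hse) * t))
        have heq : Real.exp (-((a - s.max' hse) * t)) = Real.exp (-(a - s.max' hse) * t) := by
          ring_nf
        linarith [heq ▸ he]
      have hmax : (insert a s).max' h = a := by
        apply le_antisymm
        · apply Finset.max'_le
          intro y hy
          rcases Finset.mem_insert.1 hy with rfl | hy
          · exact le_refl y
          · exact (hs y hy).le
        · exact Finset.le_max' _ a (Finset.mem_insert_self a s)
      have hmin : (insert a s).min' h = s.min' hse := by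
        apply le_antisymm
        · exact Finset.min'_le _ _ (Finset.mem_insert_of_mem (s.min'_mem hse))
        · apply Finset.le_min'
          intro y hy
          rcases Finset.mem_insert.1 hy with rfl | hy
          · exact (hs _ (s.min'_mem hse)).le
          · exact Finset.min'_le _ _ hy
      rw [hmax, hmin]
      nlinarith [h1, h2]
    · have hse' : s = ∅ := Finset.not_nonempty_iff_eq_empty.1 hse
      subst hse'
      have h1 : ripsMag (insert a (∅ : Finset ℝ)) t = 1 := by
        rw [show (insert a (∅ : Finset ℝ)) = {a} from by simp, ripsMag_singleton]
      have hmax : (insert a (∅ : Finset ℝ)).max' h = a := by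
        apply le_antisymm
        · apply Finset.max'_le
          intro y hy
          rcases Finset.mem_insert.1 hy with rfl | hy
          · exact le_refl y
          · simp at hy
        · exact Finset.le_max' _ a (Finset.mem_insert_self a ∅)
      have hmin : (insert a (∅ : Finset ℝ)).min' h = a := by
        apply le_antisymm
        · exact Finset.min'_le _ _ (Finset.mem_insert_self a ∅)
        · apply Finset.le_min'
          intro y hy
          rcases Finset.mem_insert.1 hy with rfl | hy
          · exact le_refl y
          · simp at hy
      rw [h1, hmax, hmin]
      simp

lemma ripsMag_spaced (c t : ℝ) (hc : 0 < c) (j : ℕ) :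
    ripsMag ((Finset.range (j+1)).image (fun k : ℕ => (k : ℝ) * c)) t
      = 1 + j * (1 - Real.exp (-c * t)) := by
  induction j with
  | zero => simp [ripsMag_singleton]
  | succ j ih =>
    rw [show j + 1 + 1 = (j+1) + 1 from rfl, Finset.range_add_one, Finset.image_insert]
    set A := (Finset.range (j+1)).image (fun k : ℕ => (k : ℝ) * c) with hAdef
    have hA : A.Nonempty := Finset.Nonempty.image ⟨0, Finset.mem_range.2 (Nat.succ_pos j)⟩ _
    have hm : ∀ x ∈ A, x < ((j+1 : ℕ) : ℝ) * c := by
      intro x hx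
      obtain ⟨k, hk, rfl⟩ := Finset.mem_image.1 hx
      apply mul_lt_mul_of_pos_right _ hc
      exact_mod_cast Finset.mem_range.1 hk
    have hmax : A.max' hA = (j : ℝ) * c := by
      apply le_antisymm
      · apply Finset.max'_le
        intro y hy
        obtain ⟨k, hk, rfl⟩ := Finset.mem_image.1 hy
        have hkj : (k : ℝ) ≤ (j : ℝ) := by
          exact_mod_cast Nat.lt_succ_iff.1 (Finset.mem_range.1 hk)
        exact mul_le_mul_of_nonneg_right hkj hc.le
      · apply Finset.le_max'
        apply Finset.mem_image.2
        exact ⟨j, Finset.mem_range.2 (Nat.lt_succ_self j), rfl⟩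
    rw [ripsMag_insert_max A hA _ t hm, ih, hmax]
    have harg : -(((j+1 : ℕ) : ℝ) * c - (j : ℝ) * c) * t = -c * t := by
      push_cast; ring
    rw [harg]
    push_cast
    ring

/-- for every `t > 0`, the supremum of `|tA|_Rips` over all finite
nonempty subsets `A` of the unit interval `[0,1]` equals `1 + t`. -/
theorem ripsMag_unitInterval_isLUB (t : ℝ) (ht : 0 < t) :
    IsLUB {x : ℝ | ∃ A : Finset ℝ, (A : Set ℝ) ⊆ Set.Icc (0 : ℝ) 1 ∧ A.Nonempty ∧
      x = ripsMag A t} (1 + t) := by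
  constructor
  · rintro x ⟨A, hsub, hne, rfl⟩
    have h1 := ripsMag_le A t ht.le hne
    have hmax1 : A.max' hne ≤ 1 := (hsub (Finset.mem_coe.2 (A.max'_mem hne))).2
    have hmin0 : 0 ≤ A.min' hne := (hsub (Finset.mem_coe.2 (A.min'_mem hne))).1
    nlinarith
  · intro b hb
    have hlow : ∀ n : ℕ, 0 < n → 1 + t / (1 + t / n) ≤ b := by
      intro n hn
      have hn' : (0 : ℝ) < n := by exact_mod_cast hn
      have hcpos : (0 : ℝ) < 1 / n := by positivity
      have hmem : (1 + (n : ℝ) * (1 - Real.exp (-(1/(n:ℝ)) * t))) ∈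
          {x : ℝ | ∃ A : Finset ℝ, (A : Set ℝ) ⊆ Set.Icc (0 : ℝ) 1 ∧ A.Nonempty ∧
            x = ripsMag A t} := by
        refine ⟨(Finset.range (n+1)).image (fun k : ℕ => (k : ℝ) * (1/(n:ℝ))), ?_, ?_, ?_⟩
        · intro x hx
          obtain ⟨k, hk, rfl⟩ := Finset.mem_image.1 (Finset.mem_coe.1 hx)
          have hkn : (k : ℝ) ≤ n := by exact_mod_cast Nat.lt_succ_iff.1 (Finset.mem_range.1 hk)
          constructor
          · positivity
          · rw [mul_one_div]
            exact div_le_one_of_le₀ hkn hn'.le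
        · exact Finset.Nonempty.image ⟨0, Finset.mem_range.2 (Nat.succ_pos n)⟩ _
        · rw [ripsMag_spaced (1/(n:ℝ)) t hcpos n]
      have hb' := hb hmem
      -- key inequality: t/(1+t/n) ≤ n * (1 - exp(-(1/n)*t))
      set u := t / (n : ℝ) with hu
      have hupos : 0 < u := by positivity
      have harg : -(1/(n:ℝ)) * t = -u := by rw [hu]; ring
      have hkey : u / (1 + u) ≤ 1 - Real.exp (-u) := by
        have he := Real.add_one_le_exp u
        have h1u : (0 : ℝ) < 1 + u := by linarith
        have hinv : (Real.exp u)⁻¹ ≤ (1 + u)⁻¹ := by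
          apply inv_anti₀ h1u
          linarith
        have hexp : Real.exp (-u) = (Real.exp u)⁻¹ := Real.exp_neg u
        have heq : u / (1 + u) = 1 - (1 + u)⁻¹ := by field_simp; ring
        rw [heq, hexp]
        linarith
      have hmul : (n : ℝ) * (u / (1 + u)) = t / (1 + u) := by
        rw [hu]; field_simp
      have : t / (1 + u) ≤ (n : ℝ) * (1 - Real.exp (-u)) := by
        rw [← hmul]
        exact mul_le_mul_of_nonneg_left hkey hn'.le
      rw [harg] at hb'
      linarith
    have htend : Filter.Tendsto (fun n : ℕ => 1 + t / (1 + t / (n : ℝ)))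
        Filter.atTop (nhds (1 + t)) := by
      have h0 : Filter.Tendsto (fun n : ℕ => t / (n : ℝ)) Filter.atTop (nhds 0) :=
        tendsto_const_div_atTop_nhds_zero_nat t
      have h1 : Filter.Tendsto (fun n : ℕ => 1 + t / (n : ℝ)) Filter.atTop (nhds (1 + 0)) :=
        tendsto_const_nhds.add h0
      have h2 : Filter.Tendsto (fun n : ℕ => t / (1 + t / (n : ℝ))) Filter.atTop
          (nhds (t / (1 + 0))) :=
        Filter.Tendsto.div tendsto_const_nhds h1 (by norm_num)
      have h3 : Filter.Tendsto (fun n : ℕ => 1 + t / (1 + t / (n : ℝ))) Filter.atTop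
          (nhds (1 + t / (1 + 0))) := tendsto_const_nhds.add h2
      simpa using h3
    exact le_of_tendsto htend (Filter.eventually_atTop.2 ⟨1, fun n hn => hlow n hn⟩)
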